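/- Let W be a capacity-ranked generalized Wilson loop diagram with non-crossing propagators. Then M(W) is a positroid, i.e., the set of bases of M(W) coincides with the set of bases determined by its Grassmann necklace under the Gale orders. -/

import Mathlib

open Finset

variable {n : ℕ} [NeZero n] {E P : Type*} [Fintype E] [DecidableEq E]
  [Fintype P] [DecidableEq P]

/-- The set of ends of a generalized Wilson loop diagram supported on the
vertex set `U ⊆ [n]`. -/
def Ends (supp : E → Finset (Fin n)) (U : Finset (Fin n)) : Finset E :=
  Finset.univ.filter fun e => (supp e ∩ U).Nonempty

/-- The capacity (rank in the ends matroid `⊕_p U(c(p), |E(p)|)`) of a set of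
ends `S`. -/
def capRank (prop : E → P) (c : P → ℕ) (S : Finset E) : ℕ :=
  ∑ p : P, min (S.filter fun e => prop e = p).card (c p)

/-- Rado independence for the generalized Wilson loop diagram: `V ⊆ [n]` is
independent in `M(W)` iff `|U| ≤ c(End(U))` for every `U ⊆ V`. -/
def IndepW (prop : E → P) (c : P → ℕ) (supp : E → Finset (Fin n))
    (V : Finset (Fin n)) : Prop :=
  ∀ U ∈ V.powerset, U.card ≤ capRank prop c (Ends supp U)

instance (prop : E → P) (c : P → ℕ) (supp : E → Finset (Fin n)) :
    DecidablePred (IndepW prop c supp) := fun V =>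
  inferInstanceAs (Decidable (∀ U ∈ V.powerset, U.card ≤ capRank prop c (Ends supp U)))

/-- The rank function of `M(W)`: the size of a largest independent subset. -/
def rkW (prop : E → P) (c : P → ℕ) (supp : E → Finset (Fin n))
    (V : Finset (Fin n)) : ℕ :=
  (V.powerset.filter fun T => IndepW prop c supp T).sup Finset.card

/-- A flat of `M(W)`. -/
def FlatW (prop : E → P) (c : P → ℕ) (supp : E → Finset (Fin n))
    (F : Finset (Fin n)) : Prop :=
  ∀ v ∉ F, rkW prop c supp (insert v F) ≠ rkW prop c supp F

/-- A circuit of `M(W)`: a minimal dependent set. -/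
def CircuitW (prop : E → P) (c : P → ℕ) (supp : E → Finset (Fin n))
    (C : Finset (Fin n)) : Prop :=
  ¬ IndepW prop c supp C ∧ ∀ v ∈ C, IndepW prop c supp (C.erase v)

/-- A cyclic flat of `M(W)`: a flat that is a union of circuits. -/
def CyclicFlatW (prop : E → P) (c : P → ℕ) (supp : E → Finset (Fin n))
    (F : Finset (Fin n)) : Prop :=
  FlatW prop c supp F ∧ ∀ v ∈ F, ∃ C ⊆ F, CircuitW prop c supp C ∧ v ∈ C

/-- Connectivity of the restriction `M(W)|F`: no partition of `F` into two
nonempty parts on which the rank is additive. -/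
def ConnectedOnW (prop : E → P) (c : P → ℕ) (supp : E → Finset (Fin n))
    (F : Finset (Fin n)) : Prop :=
  ∀ F₁ ⊆ F, F₁.Nonempty → (F \ F₁).Nonempty →
    rkW prop c supp F₁ + rkW prop c supp (F \ F₁) ≠ rkW prop c supp F

/-- A base of `M(W)`: a maximum-size independent set. -/
def IsBaseW (prop : E → P) (c : P → ℕ) (supp : E → Finset (Fin n))
    (B : Finset (Fin n)) : Prop :=
  IndepW prop c supp B ∧
    ∀ B' : Finset (Fin n), IndepW prop c supp B' → B'.card ≤ B.card

/-- The position of `x` in the linear order `<_i` on `Fin n` starting at `i`. -/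
def shiftVal (i x : Fin n) : ℕ := ((x - i : Fin n) : ℕ)

/-- The Gale (dominance) order with respect to `<_i`: `A ≤_i B` iff for every
threshold `x`, `B` has at most as many elements `≤_i x` as `A` does.  For sets
of equal size this is equivalent to the componentwise comparison of the sorted
lists `A^(j) ≤_i B^(j)`. -/
def GaleLE (i : Fin n) (A B : Finset (Fin n)) : Prop :=
  ∀ x : Fin n,
    (B.filter fun b => shiftVal i b ≤ shiftVal i x).card ≤
      (A.filter fun a => shiftVal i a ≤ shiftVal i x).card

/-- `I` is the `<_i`-lexicographically minimal base of `M(W)` (the `i`-th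
Grassmann necklace element): for every other base `B`, the `<_i`-smallest
element where `I` and `B` differ lies in `I`. -/
def LexMinBaseW (prop : E → P) (c : P → ℕ) (supp : E → Finset (Fin n))
    (i : Fin n) (I : Finset (Fin n)) : Prop :=
  IsBaseW prop c supp I ∧ ∀ B : Finset (Fin n), IsBaseW prop c supp B → B ≠ I →
    ∃ m ∈ I, m ∉ B ∧ ∀ x : Fin n, shiftVal i x < shiftVal i m → (x ∈ I ↔ x ∈ B)

/-- The support of a position on the cyclically ordered set
`C = {v_1, e_1, v_2, e_2, …, v_n, e_n}`, encoded as `Fin (2*n)` with even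
positions the vertices and odd positions the edges: a vertex `v_i` has support
`{i}` and an edge `e_i` has support `{i, i+1}` (cyclically). -/
def posSupp (x : Fin (2 * n)) : Finset (Fin n) :=
  if x.val % 2 = 0 then {⟨x.val / 2, by have := x.isLt; omega⟩}
  else {⟨x.val / 2, by have := x.isLt; omega⟩,
        ⟨x.val / 2, by have := x.isLt; omega⟩ + 1}

/-- `a, b, c, d` appear in this strict cyclic order around `Fin m`. -/
def cyc4 {m : ℕ} (a b c d : Fin m) : Prop :=
  0 < ((b - a : Fin m) : ℕ) ∧ ((b - a : Fin m) : ℕ) < ((c - a : Fin m) : ℕ) ∧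
    ((c - a : Fin m) : ℕ) < ((d - a : Fin m) : ℕ)

/-- Two propagators `p` and `q` cross: either there are ends `a, b` of `p` and
`c', d` of `q` with `a < c' < b < d < a` in the cyclic order of vertices and
edges, or `p` and `q` share three distinct elements of
`{v_1, e_1, …, v_n, e_n}` as ends. -/
def Cross (prop : E → P) (pos : E → Fin (2 * n)) (p q : P) : Prop :=
  (∃ a b c' d : E, prop a = p ∧ prop b = p ∧ prop c' = q ∧ prop d = q ∧
      cyc4 (pos a) (pos c') (pos b) (pos d)) ∨
  (∃ x y z : Fin (2 * n), x ≠ y ∧ x ≠ z ∧ y ≠ z ∧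
      ∀ w ∈ ({x, y, z} : Finset (Fin (2 * n))),
        (∃ a : E, prop a = p ∧ pos a = w) ∧ ∃ b : E, prop b = q ∧ pos b = w)



namespace GWLD
set_option linter.unusedSectionVars false
variable {α : Type*} [DecidableEq α]

variable (f : Finset α → ℕ)

def Ind (V : Finset α) : Prop := ∀ U ⊆ V, U.card ≤ f U

variable {f}

lemma Ind.subset {V W : Finset α} (h : Ind f V) (hWV : W ⊆ V) : Ind f W :=
  fun U hU => h U (hU.trans hWV)

lemma Ind.card_le {V : Finset α} (h : Ind f V) : V.card ≤ f V := h V le_rfl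

lemma ind_empty : Ind f ∅ := fun U hU => by
  simp [Finset.subset_empty.mp hU]

section Exchange

variable (hmono : ∀ ⦃S T : Finset α⦄, S ⊆ T → f S ≤ f T)
  (hsub : ∀ S T : Finset α, f (S ∪ T) + f (S ∩ T) ≤ f S + f T)
  (h0 : f ∅ = 0)

include hmono hsub h0 in
lemma exchange {A B : Finset α} (hA : Ind f A) (hB : Ind f B)
    (hcard : A.card < B.card) :
    ∃ x ∈ B, x ∉ A ∧ Ind f (insert x A) := by
  classical
  by_contra hcon
  push_neg at hcon
  set TT : Finset (Finset α) := A.powerset.filter (fun U => f U = U.card) with hTT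
  set T : Finset α := TT.sup id with hT
  have hTprop : T ⊆ A ∧ f T = T.card := by
    rw [hT]
    apply Finset.sup_induction (p := fun S => S ⊆ A ∧ f S = S.card)
    · exact ⟨Finset.empty_subset _, by simp [h0]⟩
    · rintro U ⟨hUA, hU⟩ V ⟨hVA, hV⟩
      rw [Finset.sup_eq_union]
      refine ⟨Finset.union_subset hUA hVA, ?_⟩
      have h1 : (U ∪ V).card ≤ f (U ∪ V) := hA _ (Finset.union_subset hUA hVA)
      have h2 : (U ∩ V).card ≤ f (U ∩ V) :=
        hA _ ((Finset.inter_subset_left).trans hUA)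
      have h3 := hsub U V
      have h4 := Finset.card_union_add_card_inter U V
      omega
    · intro U hU
      simp only [hTT, Finset.mem_filter, Finset.mem_powerset] at hU
      exact ⟨hU.1, hU.2⟩
  obtain ⟨hTA, hTtight⟩ := hTprop
  -- spanning property of elements of B \ A
  have hspan : ∀ b ∈ B, b ∉ A → ∀ Y : Finset α, T ⊆ Y → b ∉ Y →
      f (insert b Y) = f Y := by
    intro b hbB hbA Y hTY hbY
    have hni : ¬ Ind f (insert b A) := hcon b hbB hbA
    simp only [Ind, not_forall] at hni
    obtain ⟨W, hWsub, hWcard⟩ := hni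
    push_neg at hWcard
    have hbW : b ∈ W := by
      by_contra hbW
      have : W ⊆ A := fun x hx => by
        rcases Finset.mem_insert.mp (hWsub hx) with h | h
        · exact absurd (h ▸ hx) hbW
        · exact h
      exact absurd (hA W this) (by omega)
    set Tb : Finset α := W.erase b with hTb
    have hTbA : Tb ⊆ A := by
      intro x hx
      have hxW : x ∈ W := Finset.mem_of_mem_erase hx
      rcases Finset.mem_insert.mp (hWsub hxW) with h | h
      · exact absurd h (Finset.ne_of_mem_erase hx)
      · exact h
    have hWi : W = insert b Tb := by
      simp [hTb, Finset.insert_erase hbW]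
    have hcardW : W.card = Tb.card + 1 := by
      rw [hWi]; rw [Finset.card_insert_of_notMem (Finset.notMem_erase _ _)]
    have h1 : Tb.card ≤ f Tb := hA _ hTbA
    have h2 : f Tb ≤ f W := hmono (hWi ▸ Finset.subset_insert _ _)
    have htight : f Tb = Tb.card ∧ f W = f Tb := by omega
    -- Tb ⊆ T
    have hTbT : Tb ⊆ T := by
      have : Tb ∈ TT := by
        simp only [hTT, Finset.mem_filter, Finset.mem_powerset]
        exact ⟨hTbA, htight.1⟩
      exact Finset.le_sup (f := id) this
    -- now submodularity with Y and insert b Tb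
    have hunion : Y ∪ insert b Tb = insert b Y := by
      ext x
      simp only [Finset.mem_union, Finset.mem_insert]
      constructor
      · rintro (h | h | h)
        · exact Or.inr h
        · exact Or.inl h
        · exact Or.inr (hTY (hTbT h))
      · rintro (h | h)
        · exact Or.inr (Or.inl h)
        · exact Or.inl h
    have hinter : Y ∩ insert b Tb = Tb := by
      ext x
      simp only [Finset.mem_inter, Finset.mem_insert]
      constructor
      · rintro ⟨hxY, (rfl | h)⟩
        · exact absurd hxY hbY
        · exact h
      · intro h
        exact ⟨hTY (hTbT h), Or.inr h⟩
    have := hsub Y (insert b Tb)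
    rw [hunion, hinter] at this
    have hfW : f (insert b Tb) = f Tb := by rw [← hWi]; exact htight.2
    have hle : f (insert b Y) ≤ f Y := by omega
    exact le_antisymm hle (hmono (Finset.subset_insert _ _))
  -- induction: f (T ∪ X) = f T for X ⊆ B \ A
  have hind : ∀ X : Finset α, X ⊆ B \ A → f (T ∪ X) = f T := by
    intro X
    induction X using Finset.induction_on with
    | empty => intro _; simp
    | @insert a X' ha ih =>
      intro hsub'
      have haBA : a ∈ B \ A := hsub' (Finset.mem_insert_self _ _)
      have hX'sub : X' ⊆ B \ A := fun x hx => hsub' (Finset.mem_insert_of_mem hx)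
      have haB : a ∈ B := (Finset.mem_sdiff.mp haBA).1
      have haA : a ∉ A := (Finset.mem_sdiff.mp haBA).2
      have hnotin : a ∉ T ∪ X' := by
        intro h
        rcases Finset.mem_union.mp h with h | h
        · exact haA (hTA h)
        · exact ha h
      have heq : T ∪ insert a X' = insert a (T ∪ X') := by
        ext x; simp only [Finset.mem_union, Finset.mem_insert]; tauto
      rw [heq, hspan a haB haA (T ∪ X') Finset.subset_union_left hnotin, ih hX'sub]
  -- finish
  have hUle : ((B ∩ T) ∪ (B \ A)).card ≤ f ((B ∩ T) ∪ (B \ A)) := by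
    apply hB
    intro x hx
    rcases Finset.mem_union.mp hx with h | h
    · exact (Finset.mem_inter.mp h).1
    · exact (Finset.mem_sdiff.mp h).1
  have hfle : f ((B ∩ T) ∪ (B \ A)) ≤ f (T ∪ (B \ A)) := by
    apply hmono
    apply Finset.union_subset_union_left
    exact Finset.inter_subset_right
  rw [hind (B \ A) (Finset.Subset.refl _)] at hfle
  have hdisj1 : Disjoint (B ∩ T) (B \ A) := by
    rw [Finset.disjoint_left]
    intro x hx hx'
    exact (Finset.mem_sdiff.mp hx').2 (hTA (Finset.mem_inter.mp hx).2)
  have hcard1 : ((B ∩ T) ∪ (B \ A)).card = (B ∩ T).card + (B \ A).card :=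
    Finset.card_union_of_disjoint hdisj1
  have hTsplit : (T \ B).card + (T ∩ B).card = T.card :=
    Finset.card_sdiff_add_card_inter T B
  have hBsplit : (B \ A).card + (B ∩ A).card = B.card :=
    Finset.card_sdiff_add_card_inter B A
  have hASplit : (A \ B).card + (A ∩ B).card = A.card :=
    Finset.card_sdiff_add_card_inter A B
  have hTBsub : (T \ B).card ≤ (A \ B).card :=
    Finset.card_le_card (fun x hx => Finset.mem_sdiff.mpr
      ⟨hTA (Finset.mem_sdiff.mp hx).1, (Finset.mem_sdiff.mp hx).2⟩)
  have hInterEq : (B ∩ T).card = (T ∩ B).card := by rw [Finset.inter_comm]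
  have hABinter : (B ∩ A).card = (A ∩ B).card := by rw [Finset.inter_comm]
  omega

end Exchange

section Rank

variable (f)

open Classical in
noncomputable def rkf (V : Finset α) : ℕ :=
  (V.powerset.filter (Ind f)).sup Finset.card

variable {f}

lemma le_rkf {T V : Finset α} (hT : Ind f T) (hTV : T ⊆ V) :
    T.card ≤ rkf f V := by
  classical
  exact Finset.le_sup (Finset.mem_filter.mpr
    ⟨Finset.mem_powerset.mpr hTV, by convert hT⟩)

lemma exists_rkf (V : Finset α) :
    ∃ T, T ⊆ V ∧ Ind f T ∧ T.card = rkf f V := by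
  classical
  have hne : (V.powerset.filter (Ind f)).Nonempty :=
    ⟨∅, Finset.mem_filter.mpr ⟨Finset.mem_powerset.mpr (Finset.empty_subset _),
      by convert (ind_empty (f := f))⟩⟩
  obtain ⟨T, hT, hTeq⟩ := Finset.exists_mem_eq_sup _ hne Finset.card
  rw [Finset.mem_filter, Finset.mem_powerset] at hT
  exact ⟨T, hT.1, by convert hT.2, hTeq.symm⟩

lemma rkf_mono {V W : Finset α} (hVW : V ⊆ W) : rkf f V ≤ rkf f W := by
  obtain ⟨T, hTV, hTind, hTcard⟩ := exists_rkf (f := f) V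
  rw [← hTcard]
  exact le_rkf hTind (hTV.trans hVW)

lemma rkf_le_f (hmono : ∀ ⦃S T : Finset α⦄, S ⊆ T → f S ≤ f T) (V : Finset α) :
    rkf f V ≤ f V := by
  obtain ⟨T, hTV, hTind, hTcard⟩ := exists_rkf (f := f) V
  rw [← hTcard]
  exact (hTind.card_le).trans (hmono hTV)

variable (hmono : ∀ ⦃S T : Finset α⦄, S ⊆ T → f S ≤ f T)
  (hsub : ∀ S T : Finset α, f (S ∪ T) + f (S ∩ T) ≤ f S + f T)
  (h0 : f ∅ = 0)

include hmono hsub h0 in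
lemma augment_in {A V : Finset α} (hA : Ind f A) (hAV : A ⊆ V)
    (hlt : A.card < rkf f V) :
    ∃ y ∈ V, y ∉ A ∧ Ind f (insert y A) := by
  obtain ⟨T, hTV, hTind, hTcard⟩ := exists_rkf (f := f) V
  obtain ⟨y, hyT, hyA, hy⟩ := exchange hmono hsub h0 hA hTind (by omega)
  exact ⟨y, hTV hyT, hyA, hy⟩

include hmono hsub h0 in
lemma extend_to_card {C I : Finset α} (hC : Ind f C) (hI : Ind f I)
    (hle : C.card ≤ I.card) :
    ∃ D, C ⊆ D ∧ D \ C ⊆ I ∧ D.card = I.card ∧ Ind f D := by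
  classical
  obtain ⟨k, hk⟩ : ∃ k, I.card - C.card = k := ⟨_, rfl⟩
  induction k generalizing C with
  | zero =>
    exact ⟨C, Finset.Subset.refl _, by simp, by omega, hC⟩
  | succ k ih =>
    obtain ⟨y, hyI, hyC, hy⟩ := exchange hmono hsub h0 hC hI (by omega)
    have hcard : (insert y C).card = C.card + 1 := Finset.card_insert_of_notMem hyC
    obtain ⟨D, hCD, hDC, hDcard, hD⟩ := ih hy (by omega) (by omega)
    refine ⟨D, (Finset.subset_insert _ _).trans hCD, ?_, hDcard, hD⟩
    intro x hx
    rw [Finset.mem_sdiff] at hx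
    by_cases hxy : x = y
    · exact hxy ▸ hyI
    · have : x ∈ D \ insert y C := Finset.mem_sdiff.mpr
        ⟨hx.1, fun h => by
          rcases Finset.mem_insert.mp h with h | h
          · exact hxy h
          · exact hx.2 h⟩
      exact hDC this

end Rank

section Necklace

variable {n : ℕ} [NeZero n] {f : Finset (Fin n) → ℕ}

def IsBase (f : Finset (Fin n) → ℕ) (B : Finset (Fin n)) : Prop :=
  Ind f B ∧ ∀ B' : Finset (Fin n), Ind f B' → B'.card ≤ B.card

def LexMin (f : Finset (Fin n) → ℕ) (i : Fin n) (I : Finset (Fin n)) : Prop :=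
  IsBase f I ∧ ∀ B : Finset (Fin n), IsBase f B → B ≠ I →
    ∃ m ∈ I, m ∉ B ∧ ∀ x : Fin n, shiftVal i x < shiftVal i m → (x ∈ I ↔ x ∈ B)

lemma shiftVal_lt (i x : Fin n) : shiftVal i x < n := (x - i).isLt

lemma shiftVal_inj {i x y : Fin n} (h : shiftVal i x = shiftVal i y) : x = y := by
  have : (x - i : Fin n) = (y - i : Fin n) := Fin.val_injective h
  exact sub_left_injective this

lemma IsBase.card_eq (hB : IsBase f B) : B.card = rkf f Finset.univ := by
  obtain ⟨T, _, hTind, hTcard⟩ := exists_rkf (f := f) Finset.univ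
  have h1 : B.card ≤ rkf f Finset.univ := le_rkf hB.1 (Finset.subset_univ _)
  have h2 := hB.2 T hTind
  omega

lemma isBase_of_card (hB : Ind f B) (hcard : B.card = rkf f Finset.univ) :
    IsBase f B := by
  refine ⟨hB, fun B' hB' => ?_⟩
  have := le_rkf hB' (Finset.subset_univ B')
  omega

lemma exists_base : ∃ B : Finset (Fin n), IsBase f B := by
  obtain ⟨T, _, hTind, hTcard⟩ := exists_rkf (f := f) Finset.univ
  exact ⟨T, isBase_of_card hTind hTcard⟩

lemma sum_range_two_pow (k : ℕ) : (∑ j ∈ Finset.range k, 2 ^ j) + 1 = 2 ^ k := by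
  induction k with
  | zero => simp
  | succ k ih => rw [Finset.sum_range_succ]; rw [pow_succ]; omega

lemma sum_two_pow_lt {T : Finset (Fin n)} {g : Fin n → ℕ} {k : ℕ}
    (hinj : ∀ z ∈ T, ∀ z' ∈ T, g z = g z' → z = z') (hlt : ∀ z ∈ T, g z < k) :
    ∑ z ∈ T, 2 ^ (g z) < 2 ^ k := by
  classical
  have himg : ∑ j ∈ T.image g, 2 ^ j = ∑ z ∈ T, 2 ^ (g z) := Finset.sum_image hinj
  rw [← himg]
  have hsub : T.image g ⊆ Finset.range k := by
    intro j hj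
    obtain ⟨z, hz, rfl⟩ := Finset.mem_image.mp hj
    exact Finset.mem_range.mpr (hlt z hz)
  calc ∑ j ∈ T.image g, 2 ^ j ≤ ∑ j ∈ Finset.range k, 2 ^ j :=
        Finset.sum_le_sum_of_subset hsub
    _ < 2 ^ k := by have := sum_range_two_pow k; omega

lemma exists_lexmin (i : Fin n) : ∃ I : Finset (Fin n), LexMin f i I := by
  classical
  set S : Finset (Finset (Fin n)) := Finset.univ.filter (IsBase f) with hS
  have hne : S.Nonempty := by
    obtain ⟨B, hB⟩ := exists_base (f := f)
    exact ⟨B, by simp [hS]; convert hB⟩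
  set wt : Finset (Fin n) → ℕ := fun B => ∑ m ∈ B, 2 ^ (n - shiftVal i m) with hwt
  obtain ⟨I, hIS, hImax⟩ := Finset.exists_max_image S wt hne
  have hIbase : IsBase f I := by
    have := Finset.mem_filter.mp hIS
    convert this.2
  refine ⟨I, hIbase, fun B hBbase hBne => ?_⟩
  have hdne : ((I \ B) ∪ (B \ I)).Nonempty := by
    rw [Finset.nonempty_iff_ne_empty]
    intro h
    rw [Finset.union_eq_empty, Finset.sdiff_eq_empty_iff_subset,
      Finset.sdiff_eq_empty_iff_subset] at h
    exact hBne (Finset.Subset.antisymm h.2 h.1)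
  obtain ⟨m, hm, hmmin⟩ := Finset.exists_min_image _ (shiftVal i) hdne
  have hagree : ∀ x : Fin n, shiftVal i x < shiftVal i m → (x ∈ I ↔ x ∈ B) := by
    intro x hx
    by_contra hxy
    have hxd : x ∈ (I \ B) ∪ (B \ I) := by
      rw [Finset.mem_union, Finset.mem_sdiff, Finset.mem_sdiff]
      tauto
    exact absurd (hmmin x hxd) (by omega)
  -- key: m ∈ I \ B
  have hsplit : ∀ C : Finset (Fin n), wt C = wt (C ∩ (I ∩ B)) + wt (C \ (I ∩ B)) := by
    intro C
    rw [hwt]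
    exact (Finset.sum_inter_add_sum_sdiff C (I ∩ B) _).symm
  have hmIB : m ∉ I ∩ B := by
    rcases Finset.mem_union.mp hm with h | h
    · exact fun hc => (Finset.mem_sdiff.mp h).2 (Finset.mem_inter.mp hc).2
    · exact fun hc => (Finset.mem_sdiff.mp h).2 (Finset.mem_inter.mp hc).1
  have hkey : ∀ C : Finset (Fin n), IsBase f C → m ∈ C →
      ((C ∩ (I ∩ B) = C.filter (· ∈ I ∩ B)) → True) → wt (C \ (I ∩ B)) ≥ 2 ^ (n - shiftVal i m) := by
    intro C _ hmC _
    have : m ∈ C \ (I ∩ B) := Finset.mem_sdiff.mpr ⟨hmC, hmIB⟩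
    exact Finset.single_le_sum (f := fun z => 2 ^ (n - shiftVal i z))
      (fun _ _ => Nat.zero_le _) this
  have hsmall : ∀ C D : Finset (Fin n), (∀ z ∈ C \ (I ∩ B), m ∉ C → shiftVal i m < shiftVal i z) →
      True := fun _ _ _ => trivial
  rcases Finset.mem_union.mp hm with hmIB' | hmBI
  · -- m ∈ I \ B : done
    obtain ⟨hmI, hmB⟩ := Finset.mem_sdiff.mp hmIB'
    exact ⟨m, hmI, hmB, hagree⟩
  · -- m ∈ B \ I : contradiction with maximality of wt I
    exfalso
    obtain ⟨hmB, hmI⟩ := Finset.mem_sdiff.mp hmBI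
    have hBS : B ∈ S := by simp only [hS, Finset.mem_filter]; exact ⟨Finset.mem_univ _, by convert hBbase⟩
    have hle : wt B ≤ wt I := hImax B hBS
    -- common parts equal
    have hcap1 : B ∩ (I ∩ B) = I ∩ B := by
      ext z; simp only [Finset.mem_inter]; tauto
    have hcap2 : I ∩ (I ∩ B) = I ∩ B := by
      ext z; simp only [Finset.mem_inter]; tauto
    have hBbig : wt (B \ (I ∩ B)) ≥ 2 ^ (n - shiftVal i m) := by
      have : m ∈ B \ (I ∩ B) := Finset.mem_sdiff.mpr ⟨hmB, hmIB⟩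
      exact Finset.single_le_sum (f := fun z => 2 ^ (n - shiftVal i z))
        (fun _ _ => Nat.zero_le _) this
    have hIsmall : wt (I \ (I ∩ B)) < 2 ^ (n - shiftVal i m) := by
      apply sum_two_pow_lt
      · intro z hz z' hz' he
        have h1 := shiftVal_lt i z
        have h2 := shiftVal_lt i z'
        have : shiftVal i z = shiftVal i z' := by omega
        exact shiftVal_inj this
      · intro z hz
        rw [Finset.mem_sdiff, Finset.mem_inter] at hz
        have hzd : z ∈ (I \ B) ∪ (B \ I) := by
          rw [Finset.mem_union, Finset.mem_sdiff, Finset.mem_sdiff]; tauto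
        have h1 := hmmin z hzd
        have hne' : z ≠ m := fun h => hmI (h ▸ hz.1)
        have hne2 : shiftVal i z ≠ shiftVal i m := fun h => hne' (shiftVal_inj h)
        have h3 := shiftVal_lt i m
        have h4 := shiftVal_lt i z
        omega
    have e1 := hsplit B
    have e2 := hsplit I
    rw [hcap1] at e1
    rw [hcap2] at e2
    omega

def arcF {n : ℕ} (i x : Fin n) : Finset (Fin n) :=
  Finset.univ.filter (fun y => shiftVal i y ≤ shiftVal i x)

variable (hmono : ∀ ⦃S T : Finset (Fin n)⦄, S ⊆ T → f S ≤ f T)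
  (hsub : ∀ S T : Finset (Fin n), f (S ∪ T) + f (S ∩ T) ≤ f S + f T)
  (h0 : f ∅ = 0)

include hmono hsub h0 in
lemma greedy {i x : Fin n} {I : Finset (Fin n)} (hI : LexMin f i I) :
    (I.filter fun y => shiftVal i y ≤ shiftVal i x).card = rkf f (arcF i x) := by
  classical
  set A : Finset (Fin n) := I.filter (fun y => shiftVal i y ≤ shiftVal i x) with hA
  have hAI : A ⊆ I := Finset.filter_subset _ _
  have hAarc : A ⊆ arcF i x := by
    intro z hz
    simp only [hA, Finset.mem_filter] at hz
    simp only [arcF, Finset.mem_filter]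
    exact ⟨Finset.mem_univ _, hz.2⟩
  have hAind : Ind f A := hI.1.1.subset hAI
  have hle : A.card ≤ rkf f (arcF i x) := le_rkf hAind hAarc
  rcases Nat.lt_or_ge A.card (rkf f (arcF i x)) with hlt | hge
  swap
  · omega
  exfalso
  obtain ⟨y, hyarc, hyA, hyind⟩ := augment_in hmono hsub h0 hAind hAarc hlt
  have hyI : y ∉ I := by
    intro h
    apply hyA
    simp only [hA, Finset.mem_filter]
    simp only [arcF, Finset.mem_filter] at hyarc
    exact ⟨h, hyarc.2⟩
  have hcins : (insert y A).card = A.card + 1 := Finset.card_insert_of_notMem hyA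
  have hIcard : I.card = rkf f Finset.univ := hI.1.card_eq
  have hrkle : rkf f (arcF i x) ≤ rkf f Finset.univ := rkf_mono (Finset.subset_univ _)
  obtain ⟨D, hD1, hD2, hD3, hD4⟩ := extend_to_card hmono hsub h0 hyind hI.1.1 (by omega)
  have hDbase : IsBase f D := isBase_of_card hD4 (by omega)
  have hyD : y ∈ D := hD1 (Finset.mem_insert_self _ _)
  have hDne : D ≠ I := fun h => hyI (h ▸ hyD)
  -- D \ I ⊆ {y}
  have hDIy : D \ I ⊆ {y} := by
    intro z hz
    rw [Finset.mem_sdiff] at hz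
    rcases Finset.mem_sdiff.mp (Finset.mem_sdiff.mpr hz) with ⟨hzD, hzI⟩
    by_cases hzy : z = y
    · simp [hzy]
    · exfalso
      by_cases hzins : z ∈ insert y A
      · rcases Finset.mem_insert.mp hzins with h | h
        · exact hzy h
        · exact hzI (hAI h)
      · exact hzI (hD2 (Finset.mem_sdiff.mpr ⟨hzD, hzins⟩))
  have hIsd : (I \ D).card = 1 := by
    have h1 : (D \ I).card ≤ 1 := by
      calc (D \ I).card ≤ ({y} : Finset (Fin n)).card := Finset.card_le_card hDIy
        _ = 1 := Finset.card_singleton _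
    have h2 : y ∈ D \ I := Finset.mem_sdiff.mpr ⟨hyD, hyI⟩
    have h3 : 1 ≤ (D \ I).card := Finset.card_pos.mpr ⟨y, h2⟩
    have h4 : (D \ I).card + (D ∩ I).card = D.card := Finset.card_sdiff_add_card_inter D I
    have h5 : (I \ D).card + (I ∩ D).card = I.card := Finset.card_sdiff_add_card_inter I D
    have h6 : (D ∩ I).card = (I ∩ D).card := by rw [Finset.inter_comm]
    omega
  obtain ⟨m, hm⟩ := Finset.card_eq_one.mp hIsd
  have hmI : m ∈ I := (Finset.mem_sdiff.mp (hm ▸ Finset.mem_singleton_self m)).1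
  have hmD : m ∉ D := (Finset.mem_sdiff.mp (hm ▸ Finset.mem_singleton_self m)).2
  have hmarc : ¬ (shiftVal i m ≤ shiftVal i x) := by
    intro h
    apply hmD
    apply hD1
    apply Finset.mem_insert_of_mem
    simp only [hA, Finset.mem_filter]
    exact ⟨hmI, h⟩
  obtain ⟨m', hm'I, hm'D, hagree⟩ := hI.2 D hDbase hDne
  have hm'm : m' = m := by
    have : m' ∈ I \ D := Finset.mem_sdiff.mpr ⟨hm'I, hm'D⟩
    rw [hm] at this
    exact Finset.mem_singleton.mp this
  subst hm'm
  have hyx : shiftVal i y ≤ shiftVal i x := by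
    simp only [arcF, Finset.mem_filter] at hyarc
    exact hyarc.2
  have := (hagree y (by omega)).mpr hyD
  exact hyI this

include hmono hsub h0 in
lemma forward_gale {i x : Fin n} {I B : Finset (Fin n)} (hI : LexMin f i I)
    (hB : Ind f B) :
    (B.filter fun y => shiftVal i y ≤ shiftVal i x).card ≤
      (I.filter fun y => shiftVal i y ≤ shiftVal i x).card := by
  rw [greedy hmono hsub h0 hI]
  apply le_rkf (hB.subset (Finset.filter_subset _ _))
  intro z hz
  simp only [Finset.mem_filter] at hz
  simp only [arcF, Finset.mem_filter]
  exact ⟨Finset.mem_univ _, hz.2⟩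

end Necklace

section FinHelpers

lemma sub_val {m : ℕ} (a b : Fin m) :
    ((a - b : Fin m) : ℕ) =
      if b.val ≤ a.val then a.val - b.val else a.val + m - b.val := by
  rw [Fin.sub_def]
  have ha := a.isLt
  have hb := b.isLt
  simp only
  rcases le_or_gt b.val a.val with h | h
  · rw [if_pos h]
    have he : m - b.val + a.val = m + (a.val - b.val) := by omega
    rw [he, Nat.add_mod_left]
    exact Nat.mod_eq_of_lt (by omega)
  · rw [if_neg (show ¬ b.val ≤ a.val by omega)]
    rw [Nat.mod_eq_of_lt (show m - b.val + a.val < m by omega)]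
    omega

lemma shiftVal_def {n : ℕ} (i x : Fin n) :
    shiftVal i x = if i.val ≤ x.val then x.val - i.val else x.val + n - i.val :=
  sub_val x i

lemma shiftVal_self {n : ℕ} (i : Fin n) : shiftVal i i = 0 := by
  rw [shiftVal_def]; simp


lemma shiftVal_eq_zero {n : ℕ} [NeZero n] {i x : Fin n} (h : shiftVal i x = 0) : x = i := by
  have h1 := shiftVal_self i
  have h2 : shiftVal i x = shiftVal i i := by omega
  exact shiftVal_inj h2

lemma shiftVal_rel {n : ℕ} [NeZero n] (a b c : Fin n) :
    shiftVal a b + shiftVal b c = shiftVal a c ∨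
      shiftVal a b + shiftVal b c = shiftVal a c + n := by
  have ha := a.isLt
  have hb := b.isLt
  have hc := c.isLt
  rw [shiftVal_def, shiftVal_def, shiftVal_def]
  split_ifs <;> omega

lemma shiftVal_sub_one {n : ℕ} [NeZero n] {i x : Fin n} (h : x ≠ i) :
    shiftVal i (x - 1) = shiftVal i x - 1 := by
  have hn2 : 2 ≤ n := by
    have hx := x.isLt
    have hi := i.isLt
    have : x.val ≠ i.val := fun hc => h (Fin.ext hc)
    omega
  have h0 : (x - i : Fin n) ≠ 0 := by
    intro hc
    exact h (shiftVal_eq_zero (show shiftVal i x = 0 by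
      show ((x - i : Fin n) : ℕ) = 0; rw [hc]; rfl))
  have hz : 1 ≤ ((x - i : Fin n) : ℕ) := by
    rcases Nat.eq_zero_or_pos ((x - i : Fin n) : ℕ) with hc | hc
    · exact absurd (Fin.ext (by simpa using hc) : (x - i : Fin n) = 0) h0
    · exact hc
  have he : (x - 1 - i : Fin n) = (x - i) - 1 := by open Fin.CommRing in ring
  have h1v : ((1 : Fin n) : ℕ) = 1 := by
    rw [Fin.val_one']
    exact Nat.mod_eq_of_lt (by omega)
  show ((x - 1 - i : Fin n) : ℕ) = _
  rw [he, sub_val, h1v, if_pos hz]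
  rfl


lemma val_add_one_mod {m : ℕ} [NeZero m] (z : Fin m) :
    ((z + 1 : Fin m) : ℕ) = (z.val + 1) % m := by
  rw [Fin.val_add, Fin.val_one']
  conv_rhs => rw [Nat.add_mod, Nat.mod_eq_of_lt z.isLt]

lemma shift_succ_self {m : ℕ} [NeZero m] {z : Fin m} (hm : 2 ≤ m) :
    shiftVal z (z + 1) = 1 := by
  show ((z + 1 - z : Fin m) : ℕ) = 1
  have he : (z + 1 - z : Fin m) = 1 := by open Fin.CommRing in ring
  rw [he, Fin.val_one']
  exact Nat.mod_eq_of_lt (by omega)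

lemma shift_pred_self {m : ℕ} [NeZero m] {z : Fin m} (hm : 2 ≤ m) :
    shiftVal z (z - 1) = m - 1 := by
  show ((z - 1 - z : Fin m) : ℕ) = m - 1
  have he : (z - 1 - z : Fin m) = 0 - 1 := by open Fin.CommRing in ring
  rw [he, sub_val]
  have h1 : ((1 : Fin m) : ℕ) = 1 := by
    rw [Fin.val_one']
    exact Nat.mod_eq_of_lt (by omega)
  have h0 : ((0 : Fin m) : ℕ) = 0 := rfl
  rw [h1, h0, if_neg (by omega)]
  omega

lemma shift_add_one {m : ℕ} [NeZero m] (i z : Fin m) :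
    shiftVal i (z + 1) =
      if shiftVal i z = m - 1 then 0 else shiftVal i z + 1 := by
  have he : (z + 1 - i : Fin m) = (z - i) + 1 := by open Fin.CommRing in ring
  have h1 : shiftVal i (z + 1) = ((z - i : Fin m).val + 1) % m := by
    show ((z + 1 - i : Fin m) : ℕ) = _
    rw [he, val_add_one_mod]
  rw [h1]
  have hlt : shiftVal i z < m := shiftVal_lt i z
  have hdef : shiftVal i z = ((z - i : Fin m)).val := rfl
  rcases Nat.lt_or_ge ((z - i : Fin m)).val (m - 1) with h | h
  · rw [if_neg (by omega), Nat.mod_eq_of_lt (by omega)]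
    omega
  · rw [if_pos (by omega)]
    have : (z - i : Fin m).val + 1 = m := by omega
    rw [this, Nat.mod_self]

lemma sub_val_anchor {m : ℕ} [NeZero m] (x P Q : Fin m) :
    ((P - Q : Fin m) : ℕ) =
      if shiftVal x Q ≤ shiftVal x P then shiftVal x P - shiftVal x Q
      else shiftVal x P + m - shiftVal x Q := by
  have he : (P - Q : Fin m) = (P - x) - (Q - x) := by open Fin.CommRing in ring
  rw [he, sub_val]
  rfl

end FinHelpers

section PosHelpers

variable {n : ℕ} [NeZero n]

/-- The position of vertex `v` on the cycle of vertices and edges. -/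
def pv (v : Fin n) : Fin (2 * n) :=
  ⟨2 * v.val, by have := v.isLt; omega⟩

lemma pv_val (v : Fin n) : (pv v : ℕ) = 2 * v.val := rfl

lemma pv_inj {v w : Fin n} (h : pv v = pv w) : v = w := by
  apply Fin.ext
  have := congrArg Fin.val h
  simp only [pv_val] at this
  omega

lemma pv_add_one (v : Fin n) : pv (v + 1) = pv v + 2 := by
  have hv := v.isLt
  have hn := NeZero.pos n
  apply Fin.ext
  have h1 : ((v + 1 : Fin n) : ℕ) = (v.val + 1) % n := val_add_one_mod v
  have h2 : ((pv v + 2 : Fin (2 * n)) : ℕ) = (2 * v.val + 2) % (2 * n) := by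
    have he : (pv v + 2 : Fin (2 * n)) = pv v + 1 + 1 := by open Fin.CommRing in ring
    rw [he, val_add_one_mod, val_add_one_mod, pv_val]
    rcases Nat.lt_or_ge (2 * v.val + 1) (2 * n) with h | h
    · rw [Nat.mod_eq_of_lt h]
    · omega
  rw [pv_val, h1, h2]
  rcases Nat.lt_or_ge (v.val + 1) n with h | h
  · rw [Nat.mod_eq_of_lt h, Nat.mod_eq_of_lt (show 2 * v.val + 2 < 2 * n by omega)]
    omega
  · have hvn : (v.val + 1) % n = 0 := by
      rw [show v.val + 1 = n by omega]
      exact Nat.mod_self n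
    have he : (2 * v.val + 2) % (2 * n) = 0 := by
      rw [show 2 * v.val + 2 = 2 * n by omega]
      exact Nat.mod_self _
    omega

lemma posSupp_mem_iff {v : Fin n} {z : Fin (2 * n)} :
    v ∈ posSupp z ↔ pv v = z ∨ pv v = z + 1 ∨ pv v + 1 = z := by
  have hz := z.isLt
  have hv := v.isLt
  have hn := NeZero.pos n
  have e1 : ((z + 1 : Fin (2 * n)) : ℕ) = (z.val + 1) % (2 * n) := val_add_one_mod z
  have e2 : ((pv v + 1 : Fin (2 * n)) : ℕ) = 2 * v.val + 1 := by
    rw [val_add_one_mod, pv_val, Nat.mod_eq_of_lt (by omega)]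
  rw [Fin.ext_iff, Fin.ext_iff, Fin.ext_iff, pv_val, e1, e2]
  unfold posSupp
  split_ifs with h2
  · simp only [Finset.mem_singleton, Fin.ext_iff]
    have hmod : (z.val + 1) % (2 * n) = z.val + 1 := Nat.mod_eq_of_lt (by omega)
    rw [hmod]
    omega
  · simp only [Finset.mem_insert, Finset.mem_singleton, Fin.ext_iff]
    have hk1 : ((⟨z.val / 2, by omega⟩ + 1 : Fin n) : ℕ) = (z.val / 2 + 1) % n :=
      val_add_one_mod _
    rw [hk1]
    rcases Nat.lt_or_ge (z.val + 1) (2 * n) with hw | hw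
    · rw [Nat.mod_eq_of_lt hw, Nat.mod_eq_of_lt (show z.val / 2 + 1 < n by omega)]
      omega
    · have h1 : (z.val + 1) % (2 * n) = 0 := by
        rw [show z.val + 1 = 2 * n by omega, Nat.mod_self]
      have h3 : (z.val / 2 + 1) % n = 0 := by
        rw [show z.val / 2 + 1 = n by omega, Nat.mod_self]
      rw [h1, h3]
      omega

lemma posSupp_nonempty (z : Fin (2 * n)) : (posSupp z).Nonempty := by
  unfold posSupp
  split_ifs
  · exact ⟨_, Finset.mem_singleton_self _⟩
  · exact ⟨_, Finset.mem_insert_self _ _⟩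

lemma pv_sub_val (v w : Fin n) :
    ((pv w - pv v : Fin (2 * n)) : ℕ) = 2 * shiftVal v w := by
  have hv := v.isLt
  have hw := w.isLt
  rw [sub_val, shiftVal_def, pv_val, pv_val]
  split_ifs <;> omega

end PosHelpers

section Diagram

variable {n : ℕ} [NeZero n] {E P : Type*} [Fintype E] [DecidableEq E]
  [Fintype P] [DecidableEq P]

variable (prop : E → P) (c : P → ℕ) (supp : E → Finset (Fin n))

/-- Ends of propagator `p` meeting vertex set `S`. -/
def meets (p : P) (S : Finset (Fin n)) : Finset E :=
  Finset.univ.filter fun e => prop e = p ∧ (supp e ∩ S).Nonempty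

/-- The capacity function of the diagram, as a function of vertex sets. -/
def FW (S : Finset (Fin n)) : ℕ := capRank prop c (Ends supp S)

lemma FW_eq (S : Finset (Fin n)) :
    FW prop c supp S = ∑ p : P, min (meets prop supp p S).card (c p) := by
  unfold FW capRank
  apply Finset.sum_congr rfl
  intro p _
  have he : (Ends supp S).filter (fun e => prop e = p) = meets prop supp p S := by
    ext e
    simp only [Ends, meets, Finset.mem_filter, Finset.mem_univ, true_and]
    tauto
  rw [he]

lemma meets_mono {p : P} {S T : Finset (Fin n)} (h : S ⊆ T) :
    meets prop supp p S ⊆ meets prop supp p T := by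
  intro e he
  simp only [meets, Finset.mem_filter, Finset.mem_univ, true_and] at he ⊢
  obtain ⟨h1, v, hv⟩ := he
  exact ⟨h1, v, by
    rw [Finset.mem_inter] at hv ⊢
    exact ⟨hv.1, h hv.2⟩⟩

lemma FW_mono : ∀ ⦃S T : Finset (Fin n)⦄, S ⊆ T →
    FW prop c supp S ≤ FW prop c supp T := by
  intro S T h
  rw [FW_eq, FW_eq]
  apply Finset.sum_le_sum
  intro p _
  exact min_le_min (Finset.card_le_card (meets_mono prop supp h)) le_rfl

lemma meets_union {p : P} (S T : Finset (Fin n)) :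
    meets prop supp p (S ∪ T) = meets prop supp p S ∪ meets prop supp p T := by
  ext e
  simp only [meets, Finset.mem_filter, Finset.mem_univ, true_and, Finset.mem_union,
    Finset.Nonempty, Finset.mem_inter]
  constructor
  · rintro ⟨h1, v, hv1, hv2⟩
    rcases hv2 with h | h
    · exact Or.inl ⟨h1, v, hv1, h⟩
    · exact Or.inr ⟨h1, v, hv1, h⟩
  · rintro (⟨h1, v, hv1, hv2⟩ | ⟨h1, v, hv1, hv2⟩)
    · exact ⟨h1, v, hv1, Or.inl hv2⟩
    · exact ⟨h1, v, hv1, Or.inr hv2⟩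

lemma min_submod (u i a b cp : ℕ) (h1 : u + i ≤ a + b) (h2 : i ≤ a) (h3 : i ≤ b) :
    min u cp + min i cp ≤ min a cp + min b cp := by omega

lemma FW_submod : ∀ S T : Finset (Fin n),
    FW prop c supp (S ∪ T) + FW prop c supp (S ∩ T) ≤
      FW prop c supp S + FW prop c supp T := by
  intro S T
  rw [FW_eq, FW_eq, FW_eq, FW_eq, ← Finset.sum_add_distrib, ← Finset.sum_add_distrib]
  apply Finset.sum_le_sum
  intro p _
  have hint : meets prop supp p (S ∩ T) ⊆ meets prop supp p S ∩ meets prop supp p T := by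
    intro e he
    rw [Finset.mem_inter]
    exact ⟨meets_mono prop supp Finset.inter_subset_left he,
      meets_mono prop supp Finset.inter_subset_right he⟩
  have hcard : (meets prop supp p (S ∪ T)).card + (meets prop supp p (S ∩ T)).card ≤
      (meets prop supp p S).card + (meets prop supp p T).card := by
    rw [meets_union]
    have h1 := Finset.card_union_add_card_inter (meets prop supp p S) (meets prop supp p T)
    have h2 := Finset.card_le_card hint
    omega
  apply min_submod
  · exact hcard
  · exact Finset.card_le_card (meets_mono prop supp Finset.inter_subset_left)
  · exact Finset.card_le_card (meets_mono prop supp Finset.inter_subset_right)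

lemma FW_empty : FW prop c supp ∅ = 0 := by
  rw [FW_eq]
  apply Finset.sum_eq_zero
  intro p _
  have : meets prop supp p ∅ = ∅ := by
    ext e
    simp [meets]
  rw [this]
  simp

lemma indepW_iff (V : Finset (Fin n)) :
    IndepW prop c supp V ↔ Ind (FW prop c supp) V := by
  unfold IndepW Ind FW
  constructor
  · intro h U hU
    exact h U (Finset.mem_powerset.mpr hU)
  · intro h U hU
    exact h U (Finset.mem_powerset.mp hU)

lemma rkW_eq (V : Finset (Fin n)) :
    rkW prop c supp V = rkf (FW prop c supp) V := by
  unfold rkW rkf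
  congr 1
  ext U
  simp only [Finset.mem_filter, Finset.mem_powerset, indepW_iff]

lemma isBaseW_iff (B : Finset (Fin n)) :
    IsBaseW prop c supp B ↔ IsBase (FW prop c supp) B := by
  unfold IsBaseW IsBase
  rw [indepW_iff]
  constructor
  · rintro ⟨h1, h2⟩
    exact ⟨h1, fun B' hB' => h2 B' ((indepW_iff prop c supp B').mpr hB')⟩
  · rintro ⟨h1, h2⟩
    exact ⟨h1, fun B' hB' => h2 B' ((indepW_iff prop c supp B').mp hB')⟩

lemma lexMinBaseW_iff (i : Fin n) (I : Finset (Fin n)) :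
    LexMinBaseW prop c supp i I ↔ LexMin (FW prop c supp) i I := by
  unfold LexMinBaseW LexMin
  rw [isBaseW_iff]
  constructor
  · rintro ⟨h1, h2⟩
    exact ⟨h1, fun B hB => h2 B ((isBaseW_iff prop c supp B).mpr hB)⟩
  · rintro ⟨h1, h2⟩
    exact ⟨h1, fun B hB => h2 B ((isBaseW_iff prop c supp B).mp hB)⟩

end Diagram

section Gaps

variable {n : ℕ} [NeZero n] {U₀ : Finset (Fin n)} {nxt : Fin n → Fin n}

lemma fin_sub_one_val {m : ℕ} [NeZero m] {z : Fin m} (h : z ≠ 0) :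
    ((z - 1 : Fin m) : ℕ) = z.val - 1 := by
  have hz : 1 ≤ z.val := by
    rcases Nat.eq_zero_or_pos z.val with hc | hc
    · exact absurd (Fin.ext (by simpa using hc)) h
    · exact hc
  have hm : 2 ≤ m := by
    have := z.isLt
    omega
  have h1v : ((1 : Fin m) : ℕ) = 1 := by
    rw [Fin.val_one']
    exact Nat.mod_eq_of_lt (by omega)
  rw [sub_val, h1v, if_pos hz]

section WithNxt

variable (hmem : ∀ v, nxt v ∈ U₀)
  (hmin : ∀ v, ∀ w ∈ U₀, shiftVal v (nxt v) ≤ shiftVal v w)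

include hmem hmin

lemma gap_between {v z : Fin n} (h1 : 0 < shiftVal v z)
    (h2 : shiftVal v z < shiftVal v (nxt v)) : z ∉ U₀ := by
  intro hz
  have := hmin v z hz
  omega

lemma nxt_between {v w : Fin n} (hw1 : 0 < shiftVal v w)
    (hw2 : shiftVal v w < shiftVal v (nxt v)) : nxt w = nxt v := by
  have hl1 := shiftVal_lt w (nxt v)
  have hl2 := shiftVal_lt v (nxt v)
  have hl3 := shiftVal_lt v w
  have hl4 := shiftVal_lt w (nxt w)
  have hl5 := shiftVal_lt v (nxt w)
  have h3 : shiftVal w (nxt v) = shiftVal v (nxt v) - shiftVal v w := by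
    rcases shiftVal_rel v w (nxt v) with h | h <;> omega
  have h4 := hmin w (nxt v) (hmem v)
  have h5 : shiftVal v (nxt w) = shiftVal v w + shiftVal w (nxt w) := by
    rcases shiftVal_rel v w (nxt w) with h | h <;> omega
  have h6 := hmin v (nxt w) (hmem w)
  have h7 : shiftVal w (nxt w) = shiftVal w (nxt v) := by omega
  exact shiftVal_inj h7

lemma nxt_succ {w : Fin n} (hw : w ∉ U₀) (hw1 : w + 1 ∉ U₀) :
    nxt w = nxt (w + 1) := by
  have key : ∀ u ∈ U₀, shiftVal (w + 1) u + 1 = shiftVal w u := by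
    intro u hu
    have hne : u ≠ w := fun h => hw (h ▸ hu)
    have h0 : (u - w : Fin n) ≠ 0 := by
      intro hc
      apply hne
      exact shiftVal_eq_zero (show shiftVal w u = 0 by
        show ((u - w : Fin n) : ℕ) = 0
        rw [hc]; rfl)
    have hz : 1 ≤ shiftVal w u := by
      have : shiftVal w u ≠ 0 := fun hc => hne (shiftVal_eq_zero hc)
      omega
    have he : (u - (w + 1) : Fin n) = (u - w) - 1 := by open Fin.CommRing in ring
    have : shiftVal (w + 1) u = shiftVal w u - 1 := by
      show ((u - (w + 1) : Fin n) : ℕ) = _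
      rw [he, fin_sub_one_val h0]
      rfl
    omega
  have k1 := key (nxt w) (hmem w)
  have k2 := key (nxt (w + 1)) (hmem (w + 1))
  have m1 := hmin w (nxt (w + 1)) (hmem (w + 1))
  have m2 := hmin (w + 1) (nxt w) (hmem w)
  have : shiftVal w (nxt w) = shiftVal w (nxt (w + 1)) := by omega
  exact shiftVal_inj this

lemma posSupp_struct (z : Fin (2 * n)) :
    ∃ k : Fin n, posSupp z = {k} ∨ posSupp z = {k, k + 1} := by
  unfold posSupp
  split_ifs
  · exact ⟨_, Or.inl rfl⟩
  · exact ⟨_, Or.inr rfl⟩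

lemma supp_class {z : Fin (2 * n)} {v v' : Fin n} (hv : v ∈ posSupp z)
    (hv' : v' ∈ posSupp z) (h1 : v ∉ U₀) (h2 : v' ∉ U₀) : nxt v = nxt v' := by
  obtain ⟨k, hk | hk⟩ := posSupp_struct (U₀ := U₀) (nxt := nxt) hmem hmin z
  · rw [hk, Finset.mem_singleton] at hv hv'
    rw [hv, hv']
  · rw [hk, Finset.mem_insert, Finset.mem_singleton] at hv hv'
    rcases hv with rfl | rfl
    · rcases hv' with h | h
      · rw [h]
      · subst h
        exact nxt_succ hmem hmin h1 h2
    · rcases hv' with h | h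
      · subst h
        exact (nxt_succ hmem hmin h2 h1).symm
      · rw [h]

lemma fiber_compl_arc {u : Fin n} (hu : u ∈ U₀)
    (hne : (Finset.univ.filter fun v => v ∉ U₀ ∧ nxt v = u).Nonempty) :
    ∃ x : Fin n,
      Finset.univ \ (Finset.univ.filter fun v => v ∉ U₀ ∧ nxt v = u) =
        Finset.univ.filter fun y => shiftVal u y ≤ shiftVal u x := by
  classical
  set K : Finset (Fin n) := Finset.univ.filter (fun v => v ∉ U₀ ∧ nxt v = u) with hK
  obtain ⟨v₀, hv₀K, hv₀min⟩ := Finset.exists_min_image K (shiftVal u) hne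
  have hv₀ : v₀ ∉ U₀ ∧ nxt v₀ = u := by
    have := Finset.mem_filter.mp hv₀K
    exact this.2
  have hvne : v₀ ≠ u := fun h => hv₀.1 (h ▸ hu)
  have hs1 : 1 ≤ shiftVal u v₀ := by
    have : shiftVal u v₀ ≠ 0 := fun hc => hvne (shiftVal_eq_zero hc)
    omega
  refine ⟨v₀ - 1, ?_⟩
  have hsub1 : shiftVal u (v₀ - 1) = shiftVal u v₀ - 1 := shiftVal_sub_one hvne
  ext y
  simp only [Finset.mem_sdiff, Finset.mem_univ, true_and, hK, Finset.mem_filter]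
  rw [hsub1]
  constructor
  · intro hy
    by_contra hc
    push_neg at hc
    have hyv : shiftVal u v₀ ≤ shiftVal u y := by omega
    apply hy
    refine ⟨?_, ?_⟩
    · -- y ∉ U₀
      by_cases hyy : y = v₀
      · exact hyy ▸ hv₀.1
      · have hlt : shiftVal u v₀ < shiftVal u y := by
          rcases Nat.lt_or_ge (shiftVal u v₀) (shiftVal u y) with h | h
          · exact h
          · have heq : shiftVal u y = shiftVal u v₀ := by omega
            exact absurd (shiftVal_inj heq) hyy
        have hrel1 : shiftVal v₀ y = shiftVal u y - shiftVal u v₀ := by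
          have l1 := shiftVal_lt v₀ y
          have l2 := shiftVal_lt u y
          rcases shiftVal_rel u v₀ y with h | h <;> omega
        have hrelu : shiftVal v₀ u = n - shiftVal u v₀ := by
          have l1 := shiftVal_lt v₀ u
          have l2 := shiftVal_lt u v₀
          have h1 : 1 ≤ shiftVal v₀ u := by
            have : shiftVal v₀ u ≠ 0 :=
              fun hc => hvne (shiftVal_eq_zero hc).symm
            omega
          have hz := shiftVal_self u
          rcases shiftVal_rel u v₀ u with h | h <;> omega
        have l3 := shiftVal_lt u y
        apply gap_between hmem hmin (v := v₀)
        · omega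
        · rw [hv₀.2, hrelu]
          omega
    · -- nxt y = u
      by_cases hyy : y = v₀
      · exact hyy ▸ hv₀.2
      · have hlt : shiftVal u v₀ < shiftVal u y := by
          rcases Nat.lt_or_ge (shiftVal u v₀) (shiftVal u y) with h | h
          · exact h
          · have heq : shiftVal u y = shiftVal u v₀ := by omega
            exact absurd (shiftVal_inj heq) hyy
        have hrel1 : shiftVal v₀ y = shiftVal u y - shiftVal u v₀ := by
          have l1 := shiftVal_lt v₀ y
          have l2 := shiftVal_lt u y
          rcases shiftVal_rel u v₀ y with h | h <;> omega
        have hrelu : shiftVal v₀ u = n - shiftVal u v₀ := by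
          have l1 := shiftVal_lt v₀ u
          have l2 := shiftVal_lt u v₀
          have h1 : 1 ≤ shiftVal v₀ u := by
            have : shiftVal v₀ u ≠ 0 :=
              fun hc => hvne (shiftVal_eq_zero hc).symm
            omega
          have hz := shiftVal_self u
          rcases shiftVal_rel u v₀ u with h | h <;> omega
        have l3 := shiftVal_lt u y
        have := nxt_between hmem hmin (v := v₀) (w := y)
          (by omega) (by rw [hv₀.2, hrelu]; omega)
        rw [this, hv₀.2]
  · intro hy hc
    have := hv₀min y (by rw [hK, Finset.mem_filter]; exact ⟨Finset.mem_univ _, hc⟩)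
    omega

end WithNxt

end Gaps

section NoSpread

variable {n : ℕ} [NeZero n] {E P : Type*} [Fintype E] [DecidableEq E]
  [Fintype P] [DecidableEq P]

set_option maxHeartbeats 1600000 in
lemma no_spread {prop : E → P} {c : P → ℕ} {pos : E → Fin (2 * n)}
    (hnoncross : ∀ p q : P, p ≠ q → ¬ Cross prop pos p q)
    {U₀ : Finset (Fin n)}
    (hU₀v : FW prop c (fun e => posSupp (pos e)) U₀ < U₀.card)
    (hU₀min : ∀ U ⊆ U₀, U ≠ U₀ → U.card ≤ FW prop c (fun e => posSupp (pos e)) U)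
    {nxt : Fin n → Fin n} (hmem : ∀ v, nxt v ∈ U₀)
    (hmin : ∀ v, ∀ w ∈ U₀, shiftVal v (nxt v) ≤ shiftVal v w)
    {q : P}
    (hq : (meets prop (fun e => posSupp (pos e)) q U₀).card < c q)
    {e₁ e₂ : E} (hp₁ : prop e₁ = q) (hp₂ : prop e₂ = q)
    (hf₁ : ∀ v ∈ posSupp (pos e₁), v ∉ U₀)
    (hf₂ : ∀ v ∈ posSupp (pos e₂), v ∉ U₀)
    {w₁ w₂ : Fin n} (hw₁ : w₁ ∈ posSupp (pos e₁)) (hw₂ : w₂ ∈ posSupp (pos e₂))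
    (hnuu : nxt w₁ ≠ nxt w₂) : False := by
  classical
  haveI h2n : NeZero (2 * n) := ⟨by have := NeZero.pos n; omega⟩
  have hn2 : 2 ≤ 2 * n := by have := NeZero.pos n; omega
  set supp : E → Finset (Fin n) := fun e => posSupp (pos e) with hsupp
  set x : Fin (2 * n) := pos e₁ with hx
  set y : Fin (2 * n) := pos e₂ with hy
  set η : ℕ := shiftVal x y with hηdef
  -- basic exclusions
  have hw₁U : w₁ ∉ U₀ := hf₁ _ hw₁
  have hw₂U : w₂ ∉ U₀ := hf₂ _ hw₂
  have hxy : x ≠ y := by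
    intro h
    exact hnuu (supp_class hmem hmin (h ▸ hw₁) hw₂ hw₁U hw₂U)
  have hη1 : 1 ≤ η := by
    have : η ≠ 0 := fun hc => hxy (shiftVal_eq_zero hc).symm
    omega
  have hηlt : η < 2 * n := shiftVal_lt x y
  -- position values of U₀ vertices avoid neighborhoods of x and y
  have hNice : ∀ v ∈ U₀, 2 ≤ shiftVal x (pv v) ∧ shiftVal x (pv v) ≤ 2 * n - 2 ∧
      shiftVal x (pv v) ≠ η - 1 ∧ shiftVal x (pv v) ≠ η ∧ shiftVal x (pv v) ≠ η + 1 := by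
    intro v hv
    have hvx : v ∉ posSupp x := fun hc => hf₁ v hc hv
    have hvy : v ∉ posSupp y := fun hc => hf₂ v hc hv
    rw [posSupp_mem_iff] at hvx hvy
    push_neg at hvx hvy
    obtain ⟨hx1, hx2, hx3⟩ := hvx
    obtain ⟨hy1, hy2, hy3⟩ := hvy
    have hα : shiftVal x (pv v) < 2 * n := shiftVal_lt _ _
    have hne0 : shiftVal x (pv v) ≠ 0 := fun hc => hx1 (shiftVal_eq_zero hc)
    have hne1 : shiftVal x (pv v) ≠ 1 := by
      intro hc
      apply hx2
      apply shiftVal_inj (i := x)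
      rw [hc, shift_add_one, shiftVal_self, if_neg (by omega)]
    have hnetop : shiftVal x (pv v) ≠ 2 * n - 1 := by
      intro hc
      apply hx3
      have : pv v = x - 1 := shiftVal_inj (i := x)
        (by rw [hc, shift_pred_self hn2])
      rw [this]
      open Fin.CommRing in ring
    have hneη : shiftVal x (pv v) ≠ η := fun hc => hy1 (shiftVal_inj hc)
    have hneη1 : shiftVal x (pv v) ≠ η - 1 := by
      intro hc
      apply hy3
      have : pv v = y - 1 := shiftVal_inj (i := x)
        (by rw [hc, shiftVal_sub_one (Ne.symm hxy)])
      rw [this]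
      open Fin.CommRing in ring
    have hneηp : shiftVal x (pv v) ≠ η + 1 := by
      intro hc
      rcases Nat.lt_or_ge η (2 * n - 1) with h | h
      · apply hy2
        apply shiftVal_inj (i := x)
        rw [hc, shift_add_one, if_neg (by omega)]
      · omega
    exact ⟨by omega, by omega, hneη1, hneη, hneηp⟩
  -- positions of ends covering a U₀-vertex are within 1 of the vertex position
  have hcover : ∀ (z : Fin (2 * n)) (v : Fin n), v ∈ posSupp z →
      1 ≤ shiftVal x (pv v) → shiftVal x (pv v) ≤ 2 * n - 2 →
      shiftVal x z = shiftVal x (pv v) ∨ shiftVal x z = shiftVal x (pv v) - 1 ∨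
        shiftVal x z = shiftVal x (pv v) + 1 := by
    intro z v hvz h1 h2
    rw [posSupp_mem_iff] at hvz
    rcases hvz with h | h | h
    · left; rw [h]
    · right; left
      have hzv : z = pv v - 1 := by rw [h]; open Fin.CommRing in ring
      have hpvx : pv v ≠ x := by
        intro hc
        rw [hc] at h1
        rw [shiftVal_self] at h1
        omega
      rw [hzv, shiftVal_sub_one hpvx]
    · right; right
      have hzv : z = pv v + 1 := h.symm
      rw [hzv, shift_add_one, if_neg (by omega)]
  -- the two sides
  set A : Finset (Fin n) := U₀.filter (fun v => shiftVal x (pv v) < η) with hA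
  -- vertices of fresh supports: position classes
  have hclass₁ : ∀ v ∈ posSupp x, nxt v = nxt w₁ := by
    intro v hv
    exact supp_class hmem hmin hv hw₁ (hf₁ v hv) hw₁U
  have hclass₂ : ∀ v ∈ posSupp y, nxt v = nxt w₂ := by
    intro v hv
    exact supp_class hmem hmin hv hw₂ (hf₂ v hv) hw₂U
  -- γ and δ values
  have hw₁x : shiftVal x (pv w₁) = 0 ∨ shiftVal x (pv w₁) = 1 ∨
      shiftVal x (pv w₁) = 2 * n - 1 := by
    rw [posSupp_mem_iff] at hw₁
    rcases hw₁ with h | h | h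
    · left; rw [h, shiftVal_self]
    · right; left; rw [h, shift_add_one, shiftVal_self, if_neg (by omega)]
    · right; right
      have : pv w₁ = x - 1 := by rw [← h]; open Fin.CommRing in ring
      rw [this, shift_pred_self hn2]
  have hw₂y : shiftVal x (pv w₂) = η - 1 ∨ shiftVal x (pv w₂) = η ∨
      shiftVal x (pv w₂) = (η + 1) % (2 * n) := by
    rw [posSupp_mem_iff] at hw₂
    rcases hw₂ with h | h | h
    · right; left; rw [h]
    · right; right
      rw [h, shift_add_one, hηdef]
      split_ifs with hc
      · rw [hc]
        have he2 : (2 * n - 1 + 1) = 2 * n := by omega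
        rw [he2, Nat.mod_self]
      · rw [Nat.mod_eq_of_lt (by omega)]
    · left
      have : pv w₂ = y - 1 := by rw [← h]; open Fin.CommRing in ring
      rw [this, shiftVal_sub_one (Ne.symm hxy)]
  -- w₂ is not near x, w₁ is not near y (else classes coincide)
  have hw₂notx : w₂ ∉ posSupp x := fun hc => hnuu (hclass₁ w₂ hc).symm
  have hw₁noty : w₁ ∉ posSupp y := fun hc => hnuu (hclass₂ w₁ hc)
  -- not-near facts
  have hfarx : ∀ v : Fin n, v ∉ posSupp x → shiftVal x (pv v) ≠ 0 ∧
      shiftVal x (pv v) ≠ 1 ∧ shiftVal x (pv v) ≠ 2 * n - 1 := by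
    intro v hv
    rw [posSupp_mem_iff] at hv
    push_neg at hv
    obtain ⟨hx1, hx2, hx3⟩ := hv
    refine ⟨fun hc => hx1 (shiftVal_eq_zero hc), ?_, ?_⟩
    · intro hc
      apply hx2
      apply shiftVal_inj (i := x)
      rw [hc, shift_add_one, shiftVal_self, if_neg (by omega)]
    · intro hc
      apply hx3
      have he : pv v = x - 1 := shiftVal_inj (i := x)
        (by rw [hc, shift_pred_self hn2])
      rw [he]
      open Fin.CommRing in ring
  have hfary : ∀ v : Fin n, v ∉ posSupp y → shiftVal x (pv v) ≠ η - 1 ∧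
      shiftVal x (pv v) ≠ η ∧ (η ≤ 2 * n - 2 → shiftVal x (pv v) ≠ η + 1) := by
    intro v hv
    rw [posSupp_mem_iff] at hv
    push_neg at hv
    obtain ⟨hy1, hy2, hy3⟩ := hv
    refine ⟨?_, fun hc => hy1 (shiftVal_inj hc), ?_⟩
    · intro hc
      apply hy3
      have he : pv v = y - 1 := shiftVal_inj (i := x)
        (by rw [hc, shiftVal_sub_one (Ne.symm hxy)])
      rw [he]
      open Fin.CommRing in ring
    · intro hb hc
      apply hy2
      apply shiftVal_inj (i := x)
      rw [hc, shift_add_one, hηdef, if_neg (by omega)]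
  obtain ⟨hγ1, hγ2, hγ3⟩ := hfary w₁ hw₁noty
  obtain ⟨hδ1, hδ2, hδ3⟩ := hfarx w₂ hw₂notx
  have hγval := hw₁x
  have hδval := hw₂y
  have hδlt := shiftVal_lt x (pv w₂)
  have hγlt := shiftVal_lt x (pv w₁)
  -- clean up δ : no wrap
  have hδclean : (shiftVal x (pv w₂) = η - 1 ∨ shiftVal x (pv w₂) = η ∨
      shiftVal x (pv w₂) = η + 1) ∧ 2 ≤ shiftVal x (pv w₂) ∧
      shiftVal x (pv w₂) ≤ 2 * n - 2 := by
    rcases hδval with h | h | h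
    · exact ⟨Or.inl h, by omega, by omega⟩
    · exact ⟨Or.inr (Or.inl h), by omega, by omega⟩
    · rcases Nat.lt_or_ge (η + 1) (2 * n) with hw | hw
      · rw [Nat.mod_eq_of_lt hw] at h
        exact ⟨Or.inr (Or.inr h), by omega, by omega⟩
      · exfalso
        have hη2 : η = 2 * n - 1 := by omega
        rw [show η + 1 = 2 * n by omega, Nat.mod_self] at h
        exact hδ1 h
  -- u₁ lies strictly before y, u₂ strictly after
  set u₁ : Fin n := nxt w₁ with hu₁def
  set u₂ : Fin n := nxt w₂ with hu₂def
  obtain ⟨hα₁a, hα₁b, hα₁c, hα₁d, hα₁e⟩ := hNice u₁ (hmem w₁)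
  obtain ⟨hα₂a, hα₂b, hα₂c, hα₂d, hα₂e⟩ := hNice u₂ (hmem w₂)
  have hshift12 : 2 * shiftVal w₁ w₂ =
      (if shiftVal x (pv w₁) ≤ shiftVal x (pv w₂)
        then shiftVal x (pv w₂) - shiftVal x (pv w₁)
        else shiftVal x (pv w₂) + 2 * n - shiftVal x (pv w₁)) := by
    rw [← pv_sub_val, sub_val_anchor x]
  have hshift21 : 2 * shiftVal w₂ w₁ =
      (if shiftVal x (pv w₂) ≤ shiftVal x (pv w₁)
        then shiftVal x (pv w₁) - shiftVal x (pv w₂)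
        else shiftVal x (pv w₁) + 2 * n - shiftVal x (pv w₂)) := by
    rw [← pv_sub_val, sub_val_anchor x]
  have hshift1u : 2 * shiftVal w₁ u₁ =
      (if shiftVal x (pv w₁) ≤ shiftVal x (pv u₁)
        then shiftVal x (pv u₁) - shiftVal x (pv w₁)
        else shiftVal x (pv u₁) + 2 * n - shiftVal x (pv w₁)) := by
    rw [← pv_sub_val, sub_val_anchor x]
  have hshift2u : 2 * shiftVal w₂ u₂ =
      (if shiftVal x (pv w₂) ≤ shiftVal x (pv u₂)
        then shiftVal x (pv u₂) - shiftVal x (pv w₂)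
        else shiftVal x (pv u₂) + 2 * n - shiftVal x (pv w₂)) := by
    rw [← pv_sub_val, sub_val_anchor x]
  have hu₁A : shiftVal x (pv u₁) < η := by
    by_contra hc
    push_neg at hc
    have hgt : η < shiftVal x (pv u₁) := by omega
    apply hnuu
    symm
    apply nxt_between hmem hmin (v := w₁) (w := w₂)
    · split_ifs at hshift12 <;> omega
    · rw [← hu₁def]
      split_ifs at hshift12 hshift1u <;> omega
  have hu₂A : η < shiftVal x (pv u₂) := by
    by_contra hc
    push_neg at hc
    have hlt : shiftVal x (pv u₂) < η := by omega
    apply hnuu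
    apply nxt_between hmem hmin (v := w₂) (w := w₁)
    · split_ifs at hshift21 <;> omega
    · rw [← hu₂def]
      split_ifs at hshift21 hshift2u <;> omega
  -- the two sides of U₀
  set A : Finset (Fin n) := U₀.filter (fun v => shiftVal x (pv v) < η) with hA
  set A' : Finset (Fin n) := U₀ \ A with hA'
  have hAsub : A ⊆ U₀ := Finset.filter_subset _ _
  have hA'sub : A' ⊆ U₀ := Finset.sdiff_subset
  have hu₁mem : u₁ ∈ A := Finset.mem_filter.mpr ⟨hmem w₁, hu₁A⟩
  have hu₂mem : u₂ ∈ A' := by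
    rw [hA', Finset.mem_sdiff]
    exact ⟨hmem w₂, fun hc => by
      have := (Finset.mem_filter.mp hc).2
      omega⟩
  have hAne : A ≠ U₀ := by
    intro hc
    have : u₂ ∈ A := hc ▸ hmem w₂
    have := (Finset.mem_filter.mp this).2
    omega
  have hA'ne : A' ≠ U₀ := by
    intro hc
    have h1 : u₁ ∈ A' := hc ▸ hmem w₁
    rw [hA', Finset.mem_sdiff] at h1
    exact h1.2 hu₁mem
  -- dichotomy for ends meeting U₀
  have hdich : ∀ (z : Fin (2 * n)) (v v' : Fin n), v ∈ posSupp z → v' ∈ posSupp z →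
      v ∈ U₀ → v' ∈ U₀ → (shiftVal x (pv v) < η ↔ shiftVal x (pv v') < η) := by
    intro z v v' hvz hv'z hvU hv'U
    obtain ⟨b1, b2, b3, b4, b5⟩ := hNice v hvU
    obtain ⟨c1, c2, c3, c4, c5⟩ := hNice v' hv'U
    have d1 := hcover z v hvz (by omega) (by omega)
    have d2 := hcover z v' hv'z (by omega) (by omega)
    omega
  -- splitting of meets
  have hsplitM : ∀ p' : P, (meets prop supp p' U₀).card =
      (meets prop supp p' A).card + (meets prop supp p' A').card := by
    intro p'
    have hunion : meets prop supp p' U₀ = meets prop supp p' A ∪ meets prop supp p' A' := by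
      ext e
      simp only [meets, Finset.mem_filter, Finset.mem_univ, true_and, Finset.mem_union]
      constructor
      · rintro ⟨hpe, v, hv⟩
        rw [Finset.mem_inter] at hv
        by_cases hside : shiftVal x (pv v) < η
        · exact Or.inl ⟨hpe, v, Finset.mem_inter.mpr
            ⟨hv.1, Finset.mem_filter.mpr ⟨hv.2, hside⟩⟩⟩
        · refine Or.inr ⟨hpe, v, Finset.mem_inter.mpr ⟨hv.1, ?_⟩⟩
          rw [hA', Finset.mem_sdiff]
          exact ⟨hv.2, fun hc => hside (Finset.mem_filter.mp hc).2⟩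
      · rintro (⟨hpe, v, hv⟩ | ⟨hpe, v, hv⟩)
        · rw [Finset.mem_inter] at hv
          exact ⟨hpe, v, Finset.mem_inter.mpr ⟨hv.1, hAsub hv.2⟩⟩
        · rw [Finset.mem_inter] at hv
          exact ⟨hpe, v, Finset.mem_inter.mpr ⟨hv.1, hA'sub hv.2⟩⟩
    have hdisj : Disjoint (meets prop supp p' A) (meets prop supp p' A') := by
      rw [Finset.disjoint_left]
      intro e he he'
      simp only [meets, Finset.mem_filter, Finset.mem_univ, true_and] at he he'
      obtain ⟨hpe, v, hv⟩ := he
      obtain ⟨_, v', hv'⟩ := he'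
      rw [Finset.mem_inter] at hv hv'
      have hvA := Finset.mem_filter.mp hv.2
      have hv'A' := Finset.mem_sdiff.mp (show v' ∈ U₀ \ A from hA' ▸ hv'.2)
      have hiff := hdich (pos e) v v' hv.1 hv'.1 hvA.1 hv'A'.1
      have hv'side : ¬ shiftVal x (pv v') < η :=
        fun hc => hv'A'.2 (Finset.mem_filter.mpr ⟨hv'A'.1, hc⟩)
      exact hv'side (hiff.mp hvA.2)
    rw [hunion, Finset.card_union_of_disjoint hdisj]
  -- connector exists, else contradiction with minimality
  by_cases hconn : ∃ p' : P, (meets prop supp p' A).Nonempty ∧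
      (meets prop supp p' A').Nonempty ∧ c p' < (meets prop supp p' U₀).card
  · obtain ⟨p', ⟨a, ha⟩, ⟨b, hb⟩, hcp⟩ := hconn
    have hpq : p' ≠ q := by
      intro hc
      subst hc
      omega
    simp only [meets, Finset.mem_filter, Finset.mem_univ, true_and] at ha hb
    obtain ⟨hpa, va, hva⟩ := ha
    obtain ⟨hpb, vb, hvb⟩ := hb
    rw [Finset.mem_inter] at hva hvb
    have hvaA := Finset.mem_filter.mp hva.2
    have hvbA' := Finset.mem_sdiff.mp (show vb ∈ U₀ \ A from hA' ▸ hvb.2)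
    have hvbside : ¬ shiftVal x (pv vb) < η :=
      fun hc => hvbA'.2 (Finset.mem_filter.mpr ⟨hvbA'.1, hc⟩)
    obtain ⟨a1, a2, a3, a4, a5⟩ := hNice va hvaA.1
    obtain ⟨b1, b2, b3, b4, b5⟩ := hNice vb hvbA'.1
    have da := hcover (pos a) va hva.1 (by omega) (by omega)
    have db := hcover (pos b) vb hvb.1 (by omega) (by omega)
    have hza : 0 < shiftVal x (pos a) ∧ shiftVal x (pos a) < η := by
      have := hvaA.2
      omega
    have hzb : η < shiftVal x (pos b) ∧ shiftVal x (pos b) ≤ 2 * n - 1 := by omega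
    apply hnoncross p' q hpq
    left
    refine ⟨a, b, e₂, e₁, hpa, hpb, hp₂, hp₁, ?_, ?_, ?_⟩
    · rw [← hy, sub_val_anchor x]
      split_ifs with h <;> omega
    · rw [← hy, sub_val_anchor x, sub_val_anchor x]
      have h1 : shiftVal x (pos a) ≤ shiftVal x y := by omega
      have h2 : shiftVal x (pos a) ≤ shiftVal x (pos b) := by omega
      rw [if_pos h1, if_pos h2]
      omega
    · rw [← hx, sub_val_anchor x, sub_val_anchor x]
      have h2 : shiftVal x (pos a) ≤ shiftVal x (pos b) := by omega
      have h3 : ¬ shiftVal x (pos a) ≤ shiftVal x x := by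
        rw [shiftVal_self]
        omega
      rw [if_pos h2, if_neg h3, shiftVal_self]
      omega
  · push_neg at hconn
    have hFadd : FW prop c supp U₀ = FW prop c supp A + FW prop c supp A' := by
      rw [FW_eq, FW_eq, FW_eq, ← Finset.sum_add_distrib]
      apply Finset.sum_congr rfl
      intro p' _
      have hs := hsplitM p'
      rcases Finset.eq_empty_or_nonempty (meets prop supp p' A) with he | he
      · rw [he] at hs ⊢
        simp only [Finset.card_empty] at hs ⊢
        rw [Nat.min_def]
        split_ifs <;> omega
      · rcases Finset.eq_empty_or_nonempty (meets prop supp p' A') with he' | he'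
        · rw [he'] at hs ⊢
          simp only [Finset.card_empty] at hs ⊢
          rw [Nat.min_def]
          split_ifs <;> omega
        · have := hconn p' he he'
          omega
    have h1 : A.card ≤ FW prop c supp A := hU₀min A hAsub hAne
    have h2 : A'.card ≤ FW prop c supp A' := hU₀min A' hA'sub hA'ne
    have h3 : A'.card + A.card = U₀.card := by
      rw [hA']
      have := Finset.card_sdiff_add_card_inter U₀ A
      rwa [Finset.inter_eq_right.mpr hAsub] at this
    omega

end NoSpread

section Master

variable {n : ℕ} [NeZero n] {E P : Type*} [Fintype E] [DecidableEq E]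
  [Fintype P] [DecidableEq P]

set_option maxHeartbeats 1600000 in
lemma indep_of_arc_bounds
    {prop : E → P} {c : P → ℕ} {pos : E → Fin (2 * n)}
    (hle : ∀ p : P, c p ≤ (Finset.univ.filter fun e => prop e = p).card)
    (hnoncross : ∀ p q : P, p ≠ q → ¬ Cross prop pos p q)
    {B : Finset (Fin n)} (hBcard : B.card = ∑ p : P, c p)
    (hGale : ∀ i x : Fin n, (B.filter fun y => shiftVal i y ≤ shiftVal i x).card ≤
        rkf (FW prop c (fun e => posSupp (pos e))) (arcF i x)) :
    Ind (FW prop c (fun e => posSupp (pos e))) B := by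
  classical
  by_contra hdep
  have hVne : (B.powerset.filter fun U => FW prop c (fun e => posSupp (pos e)) U < U.card).Nonempty := by
    simp only [Ind, not_forall] at hdep
    obtain ⟨U, hU⟩ := hdep
    push_neg at hU
    exact ⟨U, Finset.mem_filter.mpr ⟨Finset.mem_powerset.mpr hU.1, hU.2⟩⟩
  obtain ⟨U₀, hU₀mem, hU₀min'⟩ := Finset.exists_min_image _ Finset.card hVne
  rw [Finset.mem_filter, Finset.mem_powerset] at hU₀mem
  obtain ⟨hU₀B, hU₀v⟩ := hU₀mem
  have hU₀min : ∀ U ⊆ U₀, U ≠ U₀ → U.card ≤ FW prop c (fun e => posSupp (pos e)) U := by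
    intro U hsub hne
    by_contra hc
    push_neg at hc
    have hmem2 : U ∈ B.powerset.filter
        (fun U => FW prop c (fun e => posSupp (pos e)) U < U.card) :=
      Finset.mem_filter.mpr ⟨Finset.mem_powerset.mpr (hsub.trans hU₀B), hc⟩
    have h1 := hU₀min' U hmem2
    have h2 : U.card < U₀.card := Finset.card_lt_card (ssubset_of_subset_of_ne hsub hne)
    omega
  have hU₀ne : U₀.Nonempty := by
    rcases Finset.eq_empty_or_nonempty U₀ with h | h
    · rw [h] at hU₀v
      simp at hU₀v
    · exact h
  choose nxt hnmem hnmin using fun v => Finset.exists_min_image U₀ (shiftVal v) hU₀ne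
  set K : Fin n → Finset (Fin n) :=
    fun u => Finset.univ.filter (fun v => v ∉ U₀ ∧ nxt v = u) with hK
  -- fiberwise decomposition of B \ U₀
  have hfib : (B \ U₀).card = ∑ u : Fin n, ((B \ U₀).filter (fun v => nxt v = u)).card :=
    Finset.card_eq_sum_card_fiberwise (fun v _ => Finset.mem_univ _)
  have hBK : ∀ u, (B ∩ K u).card = ((B \ U₀).filter (fun v => nxt v = u)).card := by
    intro u
    congr 1
    ext v
    simp only [hK, Finset.mem_inter, Finset.mem_filter, Finset.mem_sdiff,
      Finset.mem_univ, true_and]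
    tauto
  -- ends of p, full set
  have hmeets_univ : ∀ p : P, (meets prop (fun e => posSupp (pos e)) p Finset.univ) =
      Finset.univ.filter (fun e => prop e = p) := by
    intro p
    ext e
    simp only [meets, Finset.mem_filter, Finset.mem_univ, true_and, and_iff_left_iff_imp]
    intro _
    obtain ⟨v, hv⟩ := posSupp_nonempty (pos e)
    exact ⟨v, Finset.mem_inter.mpr ⟨hv, Finset.mem_univ _⟩⟩
  -- per-gap capacity bound
  have harc : ∀ u : Fin n,
      ∑ p : P, (c p - (meets prop (fun e => posSupp (pos e)) p (Finset.univ \ K u)).card)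
        ≤ (B ∩ K u).card := by
    intro u
    rcases Finset.eq_empty_or_nonempty (K u) with hKe | hKne
    · rw [hKe]
      have : Finset.univ \ (∅ : Finset (Fin n)) = Finset.univ := by simp
      rw [this]
      have hz : ∀ p : P,
          c p - (meets prop (fun e => posSupp (pos e)) p Finset.univ).card = 0 := by
        intro p
        rw [hmeets_univ p]
        have := hle p
        omega
      rw [Finset.sum_congr rfl (fun p _ => hz p)]
      simp
    · have huU : u ∈ U₀ := by
        obtain ⟨v, hv⟩ := hKne
        rw [hK, Finset.mem_filter] at hv
        exact hv.2.2 ▸ hnmem v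
      obtain ⟨xx, hxx⟩ := fiber_compl_arc hnmem hnmin huU hKne
      -- B ∩ (univ \ K u) = B.filter (shift ≤)
      have hBfilter : B.filter (fun y => shiftVal u y ≤ shiftVal u xx) = B \ K u := by
        ext v
        rw [Finset.mem_filter, Finset.mem_sdiff]
        constructor
        · rintro ⟨hvB, hvs⟩
          refine ⟨hvB, fun hc => ?_⟩
          have hmem3 : v ∈ Finset.univ \
              (Finset.univ.filter (fun v => v ∉ U₀ ∧ nxt v = u)) := by
            rw [hxx]
            exact Finset.mem_filter.mpr ⟨Finset.mem_univ _, hvs⟩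
          exact (Finset.mem_sdiff.mp hmem3).2 hc
        · rintro ⟨hvB, hvK⟩
          refine ⟨hvB, ?_⟩
          have hmem3 : v ∈ Finset.univ \
              (Finset.univ.filter (fun v => v ∉ U₀ ∧ nxt v = u)) :=
            Finset.mem_sdiff.mpr ⟨Finset.mem_univ _, hvK⟩
          rw [hxx] at hmem3
          exact (Finset.mem_filter.mp hmem3).2
      have hG := hGale u xx
      rw [hBfilter] at hG
      have hrk : rkf (FW prop c (fun e => posSupp (pos e))) (arcF u xx) ≤
          FW prop c (fun e => posSupp (pos e)) (Finset.univ \ K u) := by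
        have harceq : arcF u xx = Finset.univ \ K u := by
          rw [arcF, ← hxx]
        rw [harceq]
        exact rkf_le_f (FW_mono prop c _) _
      -- capacity identity
      have hcap : FW prop c (fun e => posSupp (pos e)) (Finset.univ \ K u) +
          ∑ p : P, (c p - (meets prop (fun e => posSupp (pos e)) p (Finset.univ \ K u)).card)
          = ∑ p : P, c p := by
        rw [FW_eq, ← Finset.sum_add_distrib]
        apply Finset.sum_congr rfl
        intro p _
        omega
      have hBsplit : (B \ K u).card + (B ∩ K u).card = B.card :=
        Finset.card_sdiff_add_card_inter B (K u)
      omega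
  -- concentration
  have hconc : ∀ p : P,
      (c p - (meets prop (fun e => posSupp (pos e)) p U₀).card) ≤
        ∑ u : Fin n,
          (c p - (meets prop (fun e => posSupp (pos e)) p (Finset.univ \ K u)).card) := by
    intro p
    rcases le_or_gt (c p) ((meets prop (fun e => posSupp (pos e)) p U₀).card) with h | h
    · have : c p - (meets prop (fun e => posSupp (pos e)) p U₀).card = 0 := by omega
      rw [this]
      exact Nat.zero_le _
    · -- fresh end exists
      have hsub : meets prop (fun e => posSupp (pos e)) p U₀ ⊆
          Finset.univ.filter (fun e => prop e = p) := by
        intro e he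
        rw [meets, Finset.mem_filter] at he
        exact Finset.mem_filter.mpr ⟨Finset.mem_univ _, he.2.1⟩
      have hlt : (meets prop (fun e => posSupp (pos e)) p U₀).card <
          (Finset.univ.filter (fun e => prop e = p)).card := by
        have := hle p
        omega
      have hex : ∃ e ∈ Finset.univ.filter (fun e => prop e = p),
          e ∉ meets prop (fun e => posSupp (pos e)) p U₀ := by
        by_contra hno
        push_neg at hno
        have hss : (Finset.univ.filter (fun e => prop e = p)) ⊆
            meets prop (fun e => posSupp (pos e)) p U₀ := fun e he => hno e he
        have := Finset.card_le_card hss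
        omega
      obtain ⟨e₀, he₀f, he₀m⟩ := hex
      have hpe₀ : prop e₀ = p := (Finset.mem_filter.mp he₀f).2
      have hfresh₀ : ∀ v ∈ posSupp (pos e₀), v ∉ U₀ := by
        intro v hv hvU
        apply he₀m
        rw [meets, Finset.mem_filter]
        exact ⟨Finset.mem_univ _, hpe₀, v, Finset.mem_inter.mpr ⟨hv, hvU⟩⟩
      obtain ⟨w₀, hw₀⟩ := posSupp_nonempty (pos e₀)
      -- all fresh ends of p live in the fiber of u* := nxt w₀
      have hkey : meets prop (fun e => posSupp (pos e)) p (Finset.univ \ K (nxt w₀)) =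
          meets prop (fun e => posSupp (pos e)) p U₀ := by
        ext e'
        simp only [meets, Finset.mem_filter, Finset.mem_univ, true_and]
        constructor
        · rintro ⟨hpe', v, hv⟩
          rw [Finset.mem_inter, Finset.mem_sdiff] at hv
          refine ⟨hpe', ?_⟩
          by_contra hnm
          push_neg at hnm
          have hfresh' : ∀ v' ∈ posSupp (pos e'), v' ∉ U₀ := by
            intro v' hv' hv'U
            exact absurd (Finset.mem_inter.mpr ⟨hv', hv'U⟩)
              (by
                intro hc
                exact (Finset.not_nonempty_iff_eq_empty.mpr (by
                  by_contra hne
                  exact (Finset.not_nonempty_iff_eq_empty.mpr hnm) ⟨v', Finset.mem_inter.mpr ⟨hv', hv'U⟩⟩) : ¬ _) ⟨v', hc⟩)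
          -- every vertex of e' is in the fiber of nxt w₀
          have hsuppK : ∀ v' ∈ posSupp (pos e'), v' ∈ K (nxt w₀) := by
            intro v' hv'
            rw [hK, Finset.mem_filter]
            refine ⟨Finset.mem_univ _, hfresh' v' hv', ?_⟩
            by_contra hne
            exact no_spread hnoncross hU₀v hU₀min hnmem hnmin h hpe₀ hpe'
              hfresh₀ hfresh' hw₀ hv' (Ne.symm hne)
          exact hv.2.2 (hsuppK v hv.1)
        · rintro ⟨hpe', v, hv⟩
          rw [Finset.mem_inter] at hv
          refine ⟨hpe', v, Finset.mem_inter.mpr ⟨hv.1, Finset.mem_sdiff.mpr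
            ⟨Finset.mem_univ _, fun hc => ?_⟩⟩⟩
          rw [hK, Finset.mem_filter] at hc
          exact hc.2.1 hv.2
      have hterm : c p -
          (meets prop (fun e => posSupp (pos e)) p (Finset.univ \ K (nxt w₀))).card ≤
          ∑ u : Fin n,
            (c p - (meets prop (fun e => posSupp (pos e)) p (Finset.univ \ K u)).card) :=
        Finset.single_le_sum
          (f := fun u =>
            c p - (meets prop (fun e => posSupp (pos e)) p (Finset.univ \ K u)).card)
          (fun u _ => Nat.zero_le _) (Finset.mem_univ (nxt w₀))
      rw [hkey] at hterm
      exact hterm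
  -- final counting
  have hsum1 : ∑ p : P, (c p - (meets prop (fun e => posSupp (pos e)) p U₀).card) ≤
      ∑ u : Fin n, ∑ p : P,
        (c p - (meets prop (fun e => posSupp (pos e)) p (Finset.univ \ K u)).card) := by
    rw [Finset.sum_comm]
    exact Finset.sum_le_sum (fun p _ => hconc p)
  have hsum2 : ∑ u : Fin n, ∑ p : P,
      (c p - (meets prop (fun e => posSupp (pos e)) p (Finset.univ \ K u)).card) ≤
      (B \ U₀).card := by
    rw [hfib]
    apply Finset.sum_le_sum
    intro u _
    rw [← hBK u]
    exact harc u
  have hFU : FW prop c (fun e => posSupp (pos e)) U₀ +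
      ∑ p : P, (c p - (meets prop (fun e => posSupp (pos e)) p U₀).card) = ∑ p : P, c p := by
    rw [FW_eq, ← Finset.sum_add_distrib]
    apply Finset.sum_congr rfl
    intro p _
    omega
  have hBU : (B \ U₀).card + U₀.card = B.card := by
    have := Finset.card_sdiff_add_card_inter B U₀
    rwa [Finset.inter_eq_right.mpr hU₀B] at this
  omega

end Master

end GWLD



/-- the Rado matroid `M(W)` of a capacity-ranked generalized
Wilson loop diagram with non-crossing propagators is a positroid: its set of
bases coincides with the set of `rk(M(W))`-element subsets Gale-dominating
every Grassmann necklace element `I_i` in the order `≤_i`. -/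
theorem noncrossing_capacityRanked_gwld_is_positroid
    (prop : E → P) (c : P → ℕ) (pos : E → Fin (2 * n))
    (hpos : ∀ p : P, 0 < c p)
    (hle : ∀ p : P, c p ≤ (Finset.univ.filter fun e => prop e = p).card)
    (hnoncross : ∀ p q : P, p ≠ q → ¬ Cross prop pos p q)
    (hcapranked :
      rkW prop c (fun e => posSupp (pos e)) Finset.univ = ∑ p : P, c p) :
    ∀ B : Finset (Fin n),
      IsBaseW prop c (fun e => posSupp (pos e)) B ↔
        (B.card = rkW prop c (fun e => posSupp (pos e)) Finset.univ ∧
          ∀ (i : Fin n) (I : Finset (Fin n)),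
            LexMinBaseW prop c (fun e => posSupp (pos e)) i I →
              GaleLE i I B) := by
  intro B
  have hmono := GWLD.FW_mono prop c (fun e => posSupp (pos e))
  have hsub := GWLD.FW_submod prop c (fun e => posSupp (pos e))
  have h0 := GWLD.FW_empty prop c (fun e => posSupp (pos e))
  constructor
  · intro hB
    have hBb := (GWLD.isBaseW_iff prop c (fun e => posSupp (pos e)) B).mp hB
    refine ⟨?_, ?_⟩
    · rw [GWLD.rkW_eq]
      exact GWLD.IsBase.card_eq hBb
    · intro i I hI
      have hIl := (GWLD.lexMinBaseW_iff prop c (fun e => posSupp (pos e)) i I).mp hI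
      intro x
      exact GWLD.forward_gale hmono hsub h0 hIl hBb.1
  · rintro ⟨hcard, hGale⟩
    have hGale' : ∀ i x : Fin n,
        (B.filter fun y => shiftVal i y ≤ shiftVal i x).card ≤
          GWLD.rkf (GWLD.FW prop c (fun e => posSupp (pos e))) (GWLD.arcF i x) := by
      intro i x
      obtain ⟨I, hI⟩ := GWLD.exists_lexmin (f := GWLD.FW prop c (fun e => posSupp (pos e))) i
      have hG := hGale i I ((GWLD.lexMinBaseW_iff prop c (fun e => posSupp (pos e)) i I).mpr hI) x
      rw [GWLD.greedy hmono hsub h0 hI] at hG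
      exact hG
    have hBcard : B.card = ∑ p : P, c p := by
      rw [hcard, hcapranked]
    have hind := GWLD.indep_of_arc_bounds hle hnoncross hBcard hGale'
    apply (GWLD.isBaseW_iff prop c (fun e => posSupp (pos e)) B).mpr
    apply GWLD.isBase_of_card hind
    rw [GWLD.rkW_eq] at hcard
    exact hcard
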